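/- Let H₀ be a self-adjoint operator in a complex Hilbert space ℋ, let G and J = J* be bounded operators on ℋ, and set H₁ = H₀ + G*JG. Then for every z with Im z ≠ 0 the operator I + B₀(z)J is boundedly invertible, with (I − B₁(z)J)(I + B₀(z)J) = (I + B₀(z)J)(I − B₁(z)J) = I, and B₁(z) = (I + B₀(z)J)^{-1} B₀(z), where B_j(z) = G (H_j − z)^{-1} G*, j = 0,1. -/
import Mathlib


open MeasureTheory Complex Filter Set ContinuousLinearMap Topology

noncomputable section

/-- The resolvent-type sandwiched operator `B(z) = G (H - z)⁻¹ G*`. -/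
noncomputable def sandwichedResolvent {ℋ : Type*} [NormedAddCommGroup ℋ]
    [InnerProductSpace ℂ ℋ] [CompleteSpace ℋ] (G H : ℋ →L[ℂ] ℋ) (z : ℂ) : ℋ →L[ℂ] ℋ :=
  G ∘L Ring.inverse (H - z • (1 : ℋ →L[ℂ] ℋ)) ∘L ContinuousLinearMap.adjoint G

/-- for `H₀` self-adjoint, `H₁ = H₀ + G*JG` with `G`, `J = J*` bounded,
and `Im z ≠ 0`, the operator `I + B₀(z)J` is boundedly invertible, with
`(I − B₁(z)J)(I + B₀(z)J) = (I + B₀(z)J)(I − B₁(z)J) = I` and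
`B₁(z) = (I + B₀(z)J)⁻¹ B₀(z)`, where `B_j(z) = G (H_j − z)⁻¹ G*`. -/
theorem resolvent_identities {ℋ : Type*} [NormedAddCommGroup ℋ] [InnerProductSpace ℂ ℋ]
    [CompleteSpace ℋ]
    (H₀ G J : ℋ →L[ℂ] ℋ) (hH₀ : IsSelfAdjoint H₀) (hJ : IsSelfAdjoint J)
    (H₁ : ℋ →L[ℂ] ℋ) (hH₁ : H₁ = H₀ + ContinuousLinearMap.adjoint G ∘L J ∘L G)
    (B₀ B₁ : ℂ → ℋ →L[ℂ] ℋ)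
    (hB₀ : ∀ z : ℂ, B₀ z = sandwichedResolvent G H₀ z)
    (hB₁ : ∀ z : ℂ, B₁ z = sandwichedResolvent G H₁ z)
    (z : ℂ) (hz : z.im ≠ 0) :
    IsUnit (1 + B₀ z ∘L J) ∧
    (1 - B₁ z ∘L J) ∘L (1 + B₀ z ∘L J) = 1 ∧
    (1 + B₀ z ∘L J) ∘L (1 - B₁ z ∘L J) = 1 ∧
    B₁ z = Ring.inverse (1 + B₀ z ∘L J) ∘L B₀ z := by
  -- units for the resolvents
  have hH₁sa : IsSelfAdjoint H₁ := hH₁ ▸ hH₀.add (hJ.adjoint_conj G)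
  have hunit : ∀ H : ℋ →L[ℂ] ℋ, IsSelfAdjoint H → IsUnit (H - z • (1 : ℋ →L[ℂ] ℋ)) := by
    intro H hH
    have hns : z ∉ spectrum ℂ H := fun hmem => hz (hH.im_eq_zero_of_mem_spectrum hmem)
    rw [spectrum.notMem_iff] at hns
    have : H - z • (1 : ℋ →L[ℂ] ℋ) = -(algebraMap ℂ (ℋ →L[ℂ] ℋ) z - H) := by
      rw [Algebra.algebraMap_eq_smul_one]; abel
    rw [this]
    exact hns.neg
  have u₀ := hunit H₀ hH₀
  have u₁ := hunit H₁ hH₁sa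
  set R₀ : ℋ →L[ℂ] ℋ := Ring.inverse (H₀ - z • (1 : ℋ →L[ℂ] ℋ)) with hR₀
  set R₁ : ℋ →L[ℂ] ℋ := Ring.inverse (H₁ - z • (1 : ℋ →L[ℂ] ℋ)) with hR₁
  set Gs := ContinuousLinearMap.adjoint G with hGs
  have hb₀ : B₀ z = G * R₀ * Gs := by rw [hB₀ z]; rfl
  have hb₁ : B₁ z = G * R₁ * Gs := by rw [hB₁ z]; rfl
  -- resolvent identities
  have hV : (Gs * J * G) = (H₁ - z • 1) - (H₀ - z • (1 : ℋ →L[ℂ] ℋ)) := by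
    rw [hH₁]; simp [mul_assoc]; rfl
  have hres₁ : R₁ * (Gs * J * G) * R₀ = R₀ - R₁ := by
    rw [hV]
    calc R₁ * ((H₁ - z • 1) - (H₀ - z • (1 : ℋ →L[ℂ] ℋ))) * R₀
        = (R₁ * (H₁ - z • 1)) * R₀ - R₁ * ((H₀ - z • 1) * R₀) := by noncomm_ring
      _ = R₀ - R₁ := by
          rw [Ring.inverse_mul_cancel _ u₁, Ring.mul_inverse_cancel _ u₀, one_mul, mul_one]
  have hres₂ : R₀ * (Gs * J * G) * R₁ = R₀ - R₁ := by
    rw [hV]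
    calc R₀ * ((H₁ - z • 1) - (H₀ - z • (1 : ℋ →L[ℂ] ℋ))) * R₁
        = R₀ * ((H₁ - z • 1) * R₁) - (R₀ * (H₀ - z • 1)) * R₁ := by noncomm_ring
      _ = R₀ - R₁ := by
          rw [Ring.mul_inverse_cancel _ u₁, Ring.inverse_mul_cancel _ u₀, one_mul, mul_one]
  -- key identities for B's
  have key₁ : B₁ z * J * B₀ z = B₀ z - B₁ z := by
    rw [hb₀, hb₁]
    calc G * R₁ * Gs * J * (G * R₀ * Gs)
        = G * (R₁ * (Gs * J * G) * R₀) * Gs := by noncomm_ring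
      _ = G * (R₀ - R₁) * Gs := by rw [hres₁]
      _ = G * R₀ * Gs - G * R₁ * Gs := by noncomm_ring
  have key₂ : B₀ z * J * B₁ z = B₀ z - B₁ z := by
    rw [hb₀, hb₁]
    calc G * R₀ * Gs * J * (G * R₁ * Gs)
        = G * (R₀ * (Gs * J * G) * R₁) * Gs := by noncomm_ring
      _ = G * (R₀ - R₁) * Gs := by rw [hres₂]
      _ = G * R₀ * Gs - G * R₁ * Gs := by noncomm_ring
  have left : (1 - B₁ z * J) * (1 + B₀ z * J) = 1 := by
    have : (1 - B₁ z * J) * (1 + B₀ z * J)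
        = 1 + (B₀ z - B₁ z - B₁ z * J * B₀ z) * J := by noncomm_ring
    rw [this, key₁]; noncomm_ring
  have right : (1 + B₀ z * J) * (1 - B₁ z * J) = 1 := by
    have : (1 + B₀ z * J) * (1 - B₁ z * J)
        = 1 + (B₀ z - B₁ z - B₀ z * J * B₁ z) * J := by noncomm_ring
    rw [this, key₂]; noncomm_ring
  have hu : IsUnit (1 + B₀ z * J) :=
    ⟨⟨1 + B₀ z * J, 1 - B₁ z * J, right, left⟩, rfl⟩
  refine ⟨hu, left, right, ?_⟩
  have hmul : (1 + B₀ z * J) * B₁ z = B₀ z := by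
    have : (1 + B₀ z * J) * B₁ z = B₁ z + B₀ z * J * B₁ z := by noncomm_ring
    rw [this, key₂]; abel
  have h2 : Ring.inverse (1 + B₀ z * J) * ((1 + B₀ z * J) * B₁ z)
      = Ring.inverse (1 + B₀ z * J) * B₀ z := by rw [hmul]
  rw [← mul_assoc, Ring.inverse_mul_cancel _ hu, one_mul] at h2
  exact h2
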